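/- The power set category P_o(X_n), whose objects are the proper nonempty subsets of the finite chain X_n and whose morphisms A → B are order-preserving maps, with inclusions as subobject morphisms, is a normal category: every inclusion splits, every morphism has a normal factorization q∘u∘j (retraction, isomorphism, inclusion), and for every object A there is a normal cone with vertex A whose component at A is the identity. -/

import Mathlib

section helpers
variable {α : Type*} [LinearOrder α] [Finite α]

theorem myExistsLeast (S : Set α) (hS : S.Nonempty) : ∃ m, m ∈ S ∧ ∀ x ∈ S, m ≤ x := by
  obtain ⟨m, hm, h⟩ := (Finite.to_wellFoundedLT (α := α)).wf.has_min S hS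
  exact ⟨m, hm, fun x hx => le_of_not_gt (h x hx)⟩

theorem myExistsGreatest (S : Set α) (hS : S.Nonempty) : ∃ m, m ∈ S ∧ ∀ x ∈ S, x ≤ m := by
  obtain ⟨m, hm, h⟩ := (Finite.to_wellFoundedGT (α := α)).wf.has_min S hS
  exact ⟨m, hm, fun x hx => le_of_not_gt (h x hx)⟩

open Classical in
noncomputable def projTo (S : Set α) (hS : S.Nonempty) (x : α) : S :=
  if h : (S ∩ Set.Iic x).Nonempty then
    ⟨(myExistsGreatest _ h).choose, (myExistsGreatest _ h).choose_spec.1.1⟩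
  else ⟨(myExistsLeast S hS).choose, (myExistsLeast S hS).choose_spec.1⟩

theorem projTo_mono (S : Set α) (hS : S.Nonempty) : Monotone (projTo S hS) := by
  intro x y hxy
  unfold projTo
  by_cases hx : (S ∩ Set.Iic x).Nonempty
  · have hy : (S ∩ Set.Iic y).Nonempty := by
      obtain ⟨z, hz1, hz2⟩ := hx
      exact ⟨z, hz1, le_trans hz2 hxy⟩
    rw [dif_pos hx, dif_pos hy]
    have hmem : (myExistsGreatest _ hx).choose ∈ S ∩ Set.Iic y := by
      obtain ⟨h1, h2⟩ := (myExistsGreatest _ hx).choose_spec.1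
      exact ⟨h1, le_trans h2 hxy⟩
    exact (myExistsGreatest _ hy).choose_spec.2 _ hmem
  · rw [dif_neg hx]
    by_cases hy : (S ∩ Set.Iic y).Nonempty
    · rw [dif_pos hy]
      exact (myExistsLeast S hS).choose_spec.2 _ (myExistsGreatest _ hy).choose_spec.1.1
    · rw [dif_neg hy]

theorem projTo_self (S : Set α) (hS : S.Nonempty) {x : α} (hx : x ∈ S) :
    (projTo S hS x : α) = x := by
  have h : (S ∩ Set.Iic x).Nonempty := ⟨x, hx, le_refl x⟩
  unfold projTo
  rw [dif_pos h]
  exact le_antisymm (myExistsGreatest _ h).choose_spec.1.2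
    ((myExistsGreatest _ h).choose_spec.2 x ⟨hx, le_refl x⟩)

variable {β : Type*} [LinearOrder β]

noncomputable def rmin (f : α → β) (a : α) : α :=
  (myExistsLeast {b | f b = f a} ⟨a, rfl⟩).choose

theorem rmin_map (f : α → β) (a : α) : f (rmin f a) = f a :=
  (myExistsLeast {b | f b = f a} ⟨a, rfl⟩).choose_spec.1

theorem rmin_le (f : α → β) {a b : α} (h : f b = f a) : rmin f a ≤ b :=
  (myExistsLeast {b | f b = f a} ⟨a, rfl⟩).choose_spec.2 b h

theorem rmin_congr (f : α → β) {a b : α} (h : f a = f b) : rmin f a = rmin f b :=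
  le_antisymm (rmin_le f ((rmin_map f b).trans h.symm))
    (rmin_le f ((rmin_map f a).trans h))

theorem rmin_idem (f : α → β) (a : α) : rmin f (rmin f a) = rmin f a :=
  rmin_congr f (rmin_map f a)

theorem rmin_mono {f : α → β} (hf : Monotone f) : Monotone (rmin f) := by
  intro a b hab
  rcases eq_or_lt_of_le (hf hab) with h | h
  · exact le_of_eq (rmin_congr f h)
  · by_contra hc
    push_neg at hc
    have : f (rmin f b) ≤ f (rmin f a) := hf (le_of_lt hc)
    rw [rmin_map f b, rmin_map f a] at this
    exact absurd this (not_le_of_gt h)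

end helpers



/-- The power set category `P_o(X_n)` (objects: proper nonempty subsets of the
chain `Fin n`; morphisms: order-preserving maps; subobjects: inclusions) is a
normal category: every inclusion splits, every morphism has a normal
factorization (retraction, order-isomorphism, inclusion), and every object `A`
is the vertex of a (normal) cone whose component at `A` is the identity. -/
theorem stmt13 (n : ℕ) (hn : 3 ≤ n) :
    -- (1) every inclusion splits
    (∀ A' A : Set (Fin n), A'.Nonempty → A' ≠ Set.univ → A.Nonempty → A ≠ Set.univ →
      ∀ h : A' ⊆ A, ∃ q : A → A', Monotone q ∧ ∀ x : A', q (Set.inclusion h x) = x) ∧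
    -- (2) every morphism has a normal factorization
    (∀ A B : Set (Fin n), A.Nonempty → A ≠ Set.univ → B.Nonempty → B ≠ Set.univ →
      ∀ f : A → B, Monotone f →
        ∃ (A' : Set A) (q : A → A') (u : A' ≃o (Set.range f : Set B)),
          (∀ a : A, ∃! a' : A', f (a' : A) = f a) ∧
          Monotone q ∧
          (∀ a' : A', q (a' : A) = a') ∧
          (∀ a' : A', ((u a' : (Set.range f : Set B)) : B) = f (a' : A)) ∧
          (∀ a : A, f a = ((u (q a) : (Set.range f : Set B)) : B))) ∧
    -- (3) each object is the vertex of a normal cone with identity component there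
    (∀ A : Set (Fin n), A.Nonempty → A ≠ Set.univ →
      ∃ γ : ∀ B : Set (Fin n), B.Nonempty ∧ B ≠ Set.univ → (B → A),
        (∀ B hB, Monotone (γ B hB)) ∧
        (∀ (B B' : Set (Fin n)) (hB : B.Nonempty ∧ B ≠ Set.univ) (hB' : B'.Nonempty ∧ B' ≠ Set.univ) (h : B ⊆ B'), ∀ x : B, γ B' hB' (Set.inclusion h x) = γ B hB x) ∧
        (∀ hA : A.Nonempty ∧ A ≠ Set.univ, ∀ x : A, γ A hA x = x)) := by
  refine ⟨?part1, ?part2, ?part3⟩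
  case part1 =>
    intro A' A hA'1 _ _ _ h
    refine ⟨fun a => projTo A' hA'1 (a : Fin n), ?_, ?_⟩
    · exact fun a b hab => projTo_mono A' hA'1 (Subtype.coe_le_coe.mpr hab)
    · intro x
      exact Subtype.ext (projTo_self A' hA'1 x.2)
  case part2 =>
    intro A B _ _ _ _ f hf
    refine ⟨{a : A | rmin f a = a}, fun a => ⟨rmin f a, rmin_idem f a⟩, ?_, ?_, ?_, ?_, ?_, ?_⟩
    · -- the order isomorphism u
      refine ⟨⟨fun a' => ⟨f (a' : A), ⟨(a' : A), rfl⟩⟩,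
        fun b => ⟨rmin f b.2.choose, rmin_idem f b.2.choose⟩, ?_, ?_⟩, ?_⟩
      · intro a'
        refine Subtype.ext ?_
        have hc : f (⟨f (a' : A), ⟨(a' : A), rfl⟩⟩ : (Set.range f : Set B)).2.choose
            = f (a' : A) := (⟨f (a' : A), ⟨(a' : A), rfl⟩⟩ :
              (Set.range f : Set B)).2.choose_spec
        exact (rmin_congr f hc).trans a'.2
      · intro b
        refine Subtype.ext ?_
        show f (rmin f b.2.choose) = (b : B)
        rw [rmin_map f b.2.choose]
        exact b.2.choose_spec
      · intro a' a''
        show (⟨f (a' : A), _⟩ : (Set.range f : Set B)) ≤ ⟨f (a'' : A), _⟩ ↔ _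
        rw [Subtype.mk_le_mk]
        constructor
        · intro hle
          rcases le_or_gt a' a'' with h | h
          · exact h
          · have h2 : (a'' : A) ≤ (a' : A) := le_of_lt (Subtype.coe_lt_coe.mpr h)
            have heq : f (a' : A) = f (a'' : A) := le_antisymm hle (hf h2)
            have : (a' : A) = (a'' : A) :=
              a'.2.symm.trans ((rmin_congr f heq).trans a''.2)
            exact le_of_eq (Subtype.ext (congrArg Subtype.val this))
        · intro hle
          exact hf (Subtype.coe_le_coe.mpr hle)
    · -- unique existence
      intro a
      refine ⟨⟨rmin f a, rmin_idem f a⟩, rmin_map f a, ?_⟩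
      intro a'' h
      exact Subtype.ext (a''.2.symm.trans (rmin_congr f h))
    · exact fun a b hab => Subtype.mk_le_mk.mpr (rmin_mono hf hab)
    · exact fun a' => Subtype.ext a'.2
    · exact fun a' => rfl
    · exact fun a => (rmin_map f a).symm
  case part3 =>
    intro A hA1 _
    refine ⟨fun B _ b => projTo A hA1 (b : Fin n), ?_, ?_, ?_⟩
    · exact fun B hB a b hab => projTo_mono A hA1 (Subtype.coe_le_coe.mpr hab)
    · intro B B' hB hB' h x
      rfl
    · intro hA x
      exact Subtype.ext (projTo_self A hA1 x.2)
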